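/- Suppose X : ℝ → ℝᵐ satisfies the second-order ODE Ẍ = (BᵀQḂ + (μ/ρ)BᵀQGQB)(BᵀQB)^{-1}Ẋ + (h²/ρ)BᵀQB F(X), where F(X) = -∇W(X), B(t) differentiable, Q symmetric idempotent, G symmetric negative semidefinite. Then V_r(t) = (h²/ρ)W(X(t)) + (1/2)Ẋᵀ(BᵀQB)^{-1}Ẋ satisfies V̇_r(t) = (μ/ρ)YᵀGY ≤ 0 where Y = QB(BᵀQB)^{-1}Ẋ. -/

import Mathlib

open Matrix

attribute [local instance] Matrix.linftyOpNormedAddCommGroup Matrix.linftyOpNormedSpace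
attribute [local instance] Matrix.linftyOpNormedRing Matrix.linftyOpNormedAlgebra

section helpers

variable {E F G' : Type*} [NormedAddCommGroup E] [NormedSpace ℝ E] [FiniteDimensional ℝ E]
  [NormedAddCommGroup F] [NormedSpace ℝ F] [FiniteDimensional ℝ F]
  [NormedAddCommGroup G'] [NormedSpace ℝ G']

theorem my_hasDerivAt_bilin (b : E →ₗ[ℝ] F →ₗ[ℝ] G') {f : ℝ → E} {g : ℝ → F} {f' : E} {g' : F}
    {t : ℝ} (hf : HasDerivAt f f' t) (hg : HasDerivAt g g' t) :
    HasDerivAt (fun s => b (f s) (g s)) (b f' (g t) + b (f t) g') t := by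
  let b₁ : E →ₗ[ℝ] (F →L[ℝ] G') :=
    { toFun := fun e => LinearMap.toContinuousLinearMap (b e)
      map_add' := by intros; ext; simp
      map_smul' := by intros; ext; simp }
  let B2 : E →L[ℝ] F →L[ℝ] G' := LinearMap.toContinuousLinearMap b₁
  have hb := (B2.isBoundedBilinearMap.hasFDerivAt (f t, g t)).comp_hasDerivAt t (hf.prodMk hg)
  have : HasDerivAt (fun s => b (f s) (g s))
      ((B2.isBoundedBilinearMap.deriv (f t, g t)) (f', g')) t := hb
  exact this.congr_deriv (by simp [B2, b₁, IsBoundedBilinearMap.deriv_apply, add_comm])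

end helpers

theorem dot_shift {p q : Type*} [Fintype p] [Fintype q] (C : Matrix p q ℝ) (u : p → ℝ)
    (v : q → ℝ) : u ⬝ᵥ C *ᵥ v = (Cᵀ *ᵥ u) ⬝ᵥ v := by
  rw [dotProduct_mulVec, mulVec_transpose]

theorem ROM_lyapunov_stability {n m : ℕ} (ρ μ h : ℝ)
    (hρ : 0 < ρ) (hμ : 0 < μ) (hh : 0 < h)
    (Q G : Matrix (Fin n) (Fin n) ℝ)
    (hQsymm : Qᵀ = Q) (hQidem : Q * Q = Q)
    (hGsymm : Gᵀ = G) (hG : ∀ v : Fin n → ℝ, v ⬝ᵥ G.mulVec v ≤ 0)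
    (B : ℝ → Matrix (Fin n) (Fin m) ℝ) (B' : ℝ → Matrix (Fin n) (Fin m) ℝ)
    (hB : ∀ t, HasDerivAt B (B' t) t)
    (P : ℝ → Matrix (Fin m) (Fin m) ℝ) (hP : P = fun t => (B t)ᵀ * Q * B t)
    (hPinv : ∀ t, IsUnit (P t))
    (W : (Fin m → ℝ) → ℝ) (gradW : (Fin m → ℝ) → Fin m → ℝ)
    (F : (Fin m → ℝ) → Fin m → ℝ) (hF : ∀ x, F x = -gradW x)
    (X X' X'' : ℝ → Fin m → ℝ)
    (hX : ∀ t, HasDerivAt X (X' t) t)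
    (hX' : ∀ t, HasDerivAt X' (X'' t) t)
    (hW : ∀ t, HasDerivAt (fun s => W (X s)) (gradW (X t) ⬝ᵥ X' t) t)
    (hode : ∀ t, X'' t =
      ((((B t)ᵀ * Q * B' t) + (μ / ρ) • ((B t)ᵀ * Q * G * Q * B t)) * (P t)⁻¹).mulVec (X' t)
      + (h ^ 2 / ρ) • (P t).mulVec (F (X t)))
    (Vr : ℝ → ℝ)
    (hVr : Vr = fun t =>
      (h ^ 2 / ρ) * W (X t) + (1 / 2) * (X' t ⬝ᵥ ((P t)⁻¹).mulVec (X' t)))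
    (Y : ℝ → Fin n → ℝ) (hY : Y = fun t => (Q * B t * (P t)⁻¹).mulVec (X' t)) :
    ∀ t, HasDerivAt Vr ((μ / ρ) * (Y t ⬝ᵥ G.mulVec (Y t))) t ∧
      (μ / ρ) * (Y t ⬝ᵥ G.mulVec (Y t)) ≤ 0 := by
  intro t
  have hμρ : (0:ℝ) < μ / ρ := div_pos hμ hρ
  refine ⟨?_, mul_nonpos_of_nonneg_of_nonpos hμρ.le (hG _)⟩
  -- notation
  have hAval : P t = (B t)ᵀ * Q * B t := by rw [hP]
  set A : Matrix (Fin m) (Fin m) ℝ := (B t)ᵀ * Q * B t with hA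
  set N : Matrix (Fin m) (Fin m) ℝ := A⁻¹ with hN
  have hNval : (P t)⁻¹ = N := by rw [hAval]
  have hdetA : IsUnit A.det := (isUnit_iff_isUnit_det A).mp (hAval ▸ hPinv t)
  have hAsymm : Aᵀ = A := by
    rw [hA, transpose_mul, transpose_mul, transpose_transpose, hQsymm, Matrix.mul_assoc]
  have hNsymm : Nᵀ = N := by rw [hN, transpose_nonsing_inv, hAsymm]
  have hAN : A * N = 1 := mul_nonsing_inv A hdetA
  set S : Matrix (Fin m) (Fin m) ℝ := (B t)ᵀ * Q * B' t with hS
  set K : Matrix (Fin m) (Fin m) ℝ := (B t)ᵀ * Q * G * Q * B t with hK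
  set Pd : Matrix (Fin m) (Fin m) ℝ := (B' t)ᵀ * Q * B t + (B t)ᵀ * Q * B' t with hPd
  have hSTr : Sᵀ = (B' t)ᵀ * Q * B t := by
    rw [hS, transpose_mul, transpose_mul, transpose_transpose, hQsymm, Matrix.mul_assoc]
  -- bilinear maps
  let bQ : Matrix (Fin n) (Fin m) ℝ →ₗ[ℝ] Matrix (Fin n) (Fin m) ℝ →ₗ[ℝ]
      Matrix (Fin m) (Fin m) ℝ :=
    LinearMap.mk₂ ℝ (fun A₁ C => A₁ᵀ * Q * C)
      (by intros; rw [transpose_add, Matrix.add_mul, Matrix.add_mul])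
      (by intros; simp [transpose_smul, Matrix.smul_mul])
      (by intros; rw [Matrix.mul_add])
      (by intros; simp [Matrix.mul_smul])
  let bmv : Matrix (Fin m) (Fin m) ℝ →ₗ[ℝ] (Fin m → ℝ) →ₗ[ℝ] (Fin m → ℝ) :=
    LinearMap.mk₂ ℝ (fun M v => M *ᵥ v)
      (by intros; simp [add_mulVec])
      (by intros; simp [smul_mulVec])
      (by intros; simp [mulVec_add])
      (by intros; simp [mulVec_smul])
  let bdot : (Fin m → ℝ) →ₗ[ℝ] (Fin m → ℝ) →ₗ[ℝ] ℝ :=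
    LinearMap.mk₂ ℝ (fun u v => u ⬝ᵥ v)
      (by intros; simp [add_dotProduct])
      (by intros; simp [smul_dotProduct])
      (by intros; simp [dotProduct_add])
      (by intros; simp [dotProduct_smul])
  -- derivative of P
  have hPderiv : HasDerivAt P Pd t := by
    rw [hP]
    have := my_hasDerivAt_bilin bQ (hB t) (hB t)
    simp [bQ, hPd] at this; exact this
  -- derivative of P⁻¹
  obtain ⟨u, hu⟩ := hPinv t
  have hinv : HasDerivAt (fun s => (P s)⁻¹) (-(N * Pd * N)) t := by
    have h1 : HasFDerivAt Ring.inverse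
        (-(ContinuousLinearMap.mulLeftRight ℝ _ ↑u⁻¹ ↑u⁻¹)) (P t) := by
      rw [← hu]; exact hasFDerivAt_ringInverse u
    have h2 := h1.comp_hasDerivAt t hPderiv
    have h3 : (Ring.inverse ∘ P) = fun s => (P s)⁻¹ := by
      funext s; simp [Function.comp, Matrix.nonsing_inv_eq_ringInverse]
    rw [h3] at h2
    have h4 : ((u⁻¹ : (Matrix (Fin m) (Fin m) ℝ)ˣ) : Matrix (Fin m) (Fin m) ℝ) = N := by
      rw [← Ring.inverse_unit u, hu, ← Matrix.nonsing_inv_eq_ringInverse, hNval]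
    exact h2.congr_deriv (by simp [h4, ContinuousLinearMap.mulLeftRight_apply])
  -- derivative of (P s)⁻¹ *ᵥ X' s
  have hMd : HasDerivAt (fun s => (P s)⁻¹ *ᵥ X' s)
      (-((N * Pd * N) *ᵥ X' t) + N *ᵥ X'' t) t := by
    have := my_hasDerivAt_bilin bmv hinv (hX' t)
    simpa [bmv, hNval] using this
  have hdot : HasDerivAt (fun s => X' s ⬝ᵥ (P s)⁻¹ *ᵥ X' s)
      (X'' t ⬝ᵥ N *ᵥ X' t + X' t ⬝ᵥ (-((N * Pd * N) *ᵥ X' t) + N *ᵥ X'' t)) t := by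
    have := my_hasDerivAt_bilin bdot (hX' t) hMd
    simpa [bdot, hNval] using this
  have hVd : HasDerivAt Vr
      ((h ^ 2 / ρ) * (gradW (X t) ⬝ᵥ X' t) +
        (1 / 2) * (X'' t ⬝ᵥ N *ᵥ X' t + X' t ⬝ᵥ (-((N * Pd * N) *ᵥ X' t) + N *ᵥ X'' t))) t := by
    rw [hVr]
    exact ((hW t).const_mul _).add (hdot.const_mul _)
  refine hVd.congr_deriv ?_
  -- algebra
  set X1 : Fin m → ℝ := X' t with hX1
  set X2 : Fin m → ℝ := X'' t with hX2
  set g : Fin m → ℝ := gradW (X t) with hg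
  set z : Fin m → ℝ := N *ᵥ X1 with hz
  have e0 : A *ᵥ z = X1 := by rw [hz, mulVec_mulVec, hAN, one_mulVec]
  have hode' : X2 = S *ᵥ z + (μ / ρ) • (K *ᵥ z) - (h ^ 2 / ρ) • (A *ᵥ g) := by
    rw [hX2, hode t, hF, hNval, hAval, ← hS, ← hK, ← hX1, ← hg]
    rw [Matrix.add_mul, Matrix.smul_mul, add_mulVec, smul_mulVec,
      mulVec_neg, smul_neg, ← sub_eq_add_neg]
    rw [← mulVec_mulVec X1 S N, ← mulVec_mulVec X1 K N, ← hz]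
  have t3 : (A *ᵥ g) ⬝ᵥ z = g ⬝ᵥ X1 := by
    rw [dotProduct_comm, dot_shift A z g, hAsymm, e0, dotProduct_comm]
  have e1 : X2 ⬝ᵥ z = z ⬝ᵥ S *ᵥ z + (μ / ρ) * (z ⬝ᵥ K *ᵥ z) - (h ^ 2 / ρ) * (g ⬝ᵥ X1) := by
    rw [hode', sub_dotProduct, add_dotProduct, smul_dotProduct, smul_dotProduct, t3,
      dotProduct_comm (S *ᵥ z) z, dotProduct_comm (K *ᵥ z) z, smul_eq_mul, smul_eq_mul]
  have e2a : X1 ⬝ᵥ N *ᵥ X2 = X2 ⬝ᵥ z := by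
    rw [dot_shift N X1 X2, hNsymm, ← hz, dotProduct_comm]
  have e2b : X1 ⬝ᵥ (N * Pd * N) *ᵥ X1 = 2 * (z ⬝ᵥ S *ᵥ z) := by
    have hPdS : Pd = Sᵀ + S := by rw [hPd, hSTr]
    rw [← mulVec_mulVec, ← mulVec_mulVec, ← hz, dot_shift N X1 (Pd *ᵥ z), hNsymm, ← hz,
      hPdS, add_mulVec, dotProduct_add, dot_shift Sᵀ z z, transpose_transpose,
      dotProduct_comm (S *ᵥ z) z, two_mul]
  have e3 : Y t ⬝ᵥ G *ᵥ Y t = z ⬝ᵥ K *ᵥ z := by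
    have hYt : Y t = Q *ᵥ (B t *ᵥ z) := by
      rw [hY]; dsimp only
      rw [hNval, ← hX1, ← mulVec_mulVec, ← hz, ← mulVec_mulVec]
    rw [hYt, hK]
    conv_rhs => rw [← mulVec_mulVec, ← mulVec_mulVec, ← mulVec_mulVec, ← mulVec_mulVec,
      dot_shift, transpose_transpose, dot_shift, hQsymm]
  rw [dotProduct_add, dotProduct_neg, e2a, e2b, e1, e3]
  ring
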